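/- The maximum construction cost of the suspension of the n-cycle is ν*(ΣC_n) = 13n² + 2n for all n ≥ 4. -/
import Mathlib


namespace ConsCost

variable {V : Type*} [Fintype V]

/-- The number of elements (vertices plus edges) of a graph. -/
noncomputable def numElts (G : SimpleGraph V) : ℕ :=
  Fintype.card V + Nat.card G.edgeSet

/-- `x` is a construction sequence for `G`: a bijective listing of the vertices and
edges of `G` in which every edge appears after both of its endpoints. -/
def IsCSeq (G : SimpleGraph V) (x : Fin (numElts G) ≃ V ⊕ G.edgeSet) : Prop :=
  ∀ (e : G.edgeSet), ∀ v ∈ (e : Sym2 V), x.symm (Sum.inl v) < x.symm (Sum.inr e)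

/-- The cost `ν(e,x) = (x⁻¹e − x⁻¹u) + (x⁻¹e − x⁻¹w)` of an edge `e = uw`
in the construction sequence `x`. -/
noncomputable def edgeCost (G : SimpleGraph V) (x : Fin (numElts G) ≃ V ⊕ G.edgeSet)
    (e : G.edgeSet) : ℕ :=
  2 * (x.symm (Sum.inr e) : ℕ) -
    Sym2.lift ⟨fun u w => ((x.symm (Sum.inl u) : ℕ) + (x.symm (Sum.inl w) : ℕ)),
      fun u w => by dsimp only; omega⟩ (e : Sym2 V)

/-- The cost `ν(x)` of a construction sequence: the sum of the costs of all edges. -/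
noncomputable def cost (G : SimpleGraph V) (x : Fin (numElts G) ≃ V ⊕ G.edgeSet) : ℕ :=
  ∑ᶠ e : G.edgeSet, edgeCost G x e

/-- The maximum construction cost `ν*(G)`. -/
noncomputable def maxCost (G : SimpleGraph V) : ℕ :=
  sSup {c | ∃ x, IsCSeq G x ∧ cost G x = c}

/-- The minimum construction cost `ν_*(G)`. -/
noncomputable def minCost (G : SimpleGraph V) : ℕ :=
  sInf {c | ∃ x, IsCSeq G x ∧ cost G x = c}
/-- The suspension `ΣC_n` of the `n`-cycle: the cycle `C_n` together with two new
mutually nonadjacent vertices, each joined to every cycle vertex. -/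
def suspCycle (n : ℕ) : SimpleGraph (Fin n ⊕ Fin 2) :=
  SimpleGraph.fromRel (fun a b =>
    (∃ i j : Fin n, a = Sum.inl i ∧ b = Sum.inl j ∧ (SimpleGraph.cycleGraph n).Adj i j) ∨
      (∃ (s : Fin 2) (i : Fin n), a = Sum.inr s ∧ b = Sum.inl i))

/-! ### Auxiliary material for the computation of `maxCost (suspCycle n)` -/

/-- Any finset of naturals of cardinality `m` has sum at least `0 + 1 + ⋯ + (m-1)`. -/
private lemma sum_range_card_le (T : Finset ℕ) : ∑ k ∈ Finset.range T.card, k ≤ ∑ t ∈ T, t := by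
  classical
  induction T using Finset.strongInductionOn with
  | _ T ih =>
    rcases T.eq_empty_or_nonempty with rfl | hT
    · simp
    · have hM : T.max' hT ∈ T := T.max'_mem hT
      have hsub : T ⊆ Finset.range (T.max' hT + 1) := fun t ht =>
        Finset.mem_range.mpr (Nat.lt_succ_of_le (T.le_max' t ht))
      have h1 : T.card ≤ T.max' hT + 1 := by
        simpa using Finset.card_le_card hsub
      have hpos : 0 < T.card := Finset.card_pos.mpr hT
      have h2 := ih (T.erase (T.max' hT)) (Finset.erase_ssubset hM)
      have hc : (T.erase (T.max' hT)).card = T.card - 1 := Finset.card_erase_of_mem hM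
      have h3 : T.max' hT + ∑ t ∈ T.erase (T.max' hT), t = ∑ t ∈ T, t :=
        Finset.add_sum_erase T id hM
      obtain ⟨c, hc'⟩ : ∃ c, T.card = c + 1 := ⟨T.card - 1, by omega⟩
      have hcc : (T.erase (T.max' hT)).card = c := by omega
      rw [hcc] at h2
      rw [hc', Finset.sum_range_succ]
      omega

private lemma sum_le_of_injective {α : Type*} [Fintype α] (f : α → ℕ)
    (hf : Function.Injective f) : ∑ k ∈ Finset.range (Fintype.card α), k ≤ ∑ a, f a := by
  classical
  have himg : (Finset.univ.image f).card = Fintype.card α := by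
    rw [Finset.card_image_of_injective _ hf, Finset.card_univ]
  have h := sum_range_card_le (Finset.univ.image f)
  rw [himg] at h
  have h2 : ∑ t ∈ Finset.univ.image f, t = ∑ a, f a :=
    Finset.sum_image (fun x _ y _ hxy => hf hxy)
  omega

private lemma val_one_eq {n : ℕ} [NeZero n] (hn : 4 ≤ n) : ((1 : Fin n) : ℕ) = 1 := by
  rw [Fin.val_one', Nat.mod_eq_of_lt (by omega)]

private lemma two_ne_zero' {n : ℕ} [NeZero n] (hn : 4 ≤ n) : ((1 : Fin n) + 1) ≠ 0 := by
  intro h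
  have h1 := val_one_eq (n := n) hn
  have h2 : (((1 : Fin n) + 1 : Fin n) : ℕ) = 0 := by rw [h]; simp
  have h3 : (((1 : Fin n) + 1 : Fin n) : ℕ) = (1 + 1) % n := by rw [Fin.val_add, h1]
  rw [Nat.mod_eq_of_lt (by omega)] at h3
  omega

private lemma cedge_mem {n : ℕ} [NeZero n] (hn : 4 ≤ n) (i : Fin n) :
    s(Sum.inl i, (Sum.inl (i + 1) : Fin n ⊕ Fin 2)) ∈ (suspCycle n).edgeSet := by
  rw [SimpleGraph.mem_edgeSet, suspCycle, SimpleGraph.fromRel_adj]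
  refine ⟨?_, Or.inl (Or.inl ⟨i, i + 1, rfl, rfl, ?_⟩)⟩
  · intro h
    have h2 : i = i + 1 := Sum.inl.inj h
    have h3 := left_eq_add.mp h2
    have h4 := val_one_eq (n := n) hn
    rw [h3] at h4
    simp at h4
  · rw [SimpleGraph.cycleGraph_adj']
    right
    have h : i + 1 - i = 1 := by rw [add_comm]; exact add_sub_cancel_right 1 i
    rw [h, val_one_eq hn]

private lemma aedge_mem {n : ℕ} (hn : 4 ≤ n) (s : Fin 2) (i : Fin n) :
    s((Sum.inr s : Fin n ⊕ Fin 2), Sum.inl i) ∈ (suspCycle n).edgeSet := by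
  rw [SimpleGraph.mem_edgeSet, suspCycle, SimpleGraph.fromRel_adj]
  exact ⟨by simp, Or.inl (Or.inr ⟨s, i, rfl, rfl⟩)⟩

private def φ {n : ℕ} [NeZero n] (hn : 4 ≤ n) :
    (Fin n ⊕ Fin 2 × Fin n) → (suspCycle n).edgeSet
  | Sum.inl i => ⟨s(Sum.inl i, Sum.inl (i + 1)), cedge_mem hn i⟩
  | Sum.inr (s, i) => ⟨s(Sum.inr s, Sum.inl i), aedge_mem hn s i⟩

private lemma φ_injective {n : ℕ} [NeZero n] (hn : 4 ≤ n) : Function.Injective (φ hn) := by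
  intro a b hab
  have hab' : (φ hn a).1 = (φ hn b).1 := congrArg Subtype.val hab
  match a, b with
  | Sum.inl i, Sum.inl j =>
    simp only [φ, Sym2.eq_iff, Sum.inl.injEq] at hab'
    rcases hab' with ⟨h1, _⟩ | ⟨h1, h2⟩
    · rw [h1]
    · exfalso
      have h5 : i = i + (1 + 1) := by
        nth_rewrite 1 [h1, ← h2]
        rw [add_assoc]
      exact two_ne_zero' hn (left_eq_add.mp h5)
  | Sum.inl i, Sum.inr (s, j) =>
    exfalso
    simp only [φ, Sym2.eq_iff] at hab'
    rcases hab' with ⟨h1, _⟩ | ⟨_, h2⟩ <;> simp_all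
  | Sum.inr (s, i), Sum.inl j =>
    exfalso
    simp only [φ, Sym2.eq_iff] at hab'
    rcases hab' with ⟨h1, _⟩ | ⟨_, h2⟩ <;> simp_all
  | Sum.inr (s, i), Sum.inr (t, j) =>
    simp only [φ, Sym2.eq_iff, Sum.inr.injEq, Sum.inl.injEq] at hab'
    rcases hab' with ⟨h1, h2⟩ | ⟨h1, _⟩
    · rw [h1, h2]
    · simp_all

private lemma sub_val_one {n : ℕ} [NeZero n] (hn : 4 ≤ n) {u v : Fin n}
    (h : ((u - v : Fin n) : ℕ) = 1) : u = v + 1 := by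
  have h1 : u - v = 1 := Fin.ext (by rw [val_one_eq hn]; exact h)
  have := sub_eq_iff_eq_add.mp h1
  rw [this, add_comm]

private lemma φ_surjective {n : ℕ} [NeZero n] (hn : 4 ≤ n) : Function.Surjective (φ hn) := by
  rintro ⟨e, he⟩
  induction e using Sym2.ind with
  | _ a b =>
    have hcyc : ∀ i j : Fin n, (SimpleGraph.cycleGraph n).Adj i j →
        ∃ z, (φ hn z).1 = s((Sum.inl i : Fin n ⊕ Fin 2), Sum.inl j) := by
      intro i j hadj
      rw [SimpleGraph.cycleGraph_adj'] at hadj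
      rcases hadj with h1 | h1
      · refine ⟨Sum.inl j, ?_⟩
        show s((Sum.inl j : Fin n ⊕ Fin 2), Sum.inl (j + 1)) = _
        rw [sub_val_one hn h1]
        exact Sym2.eq_swap
      · refine ⟨Sum.inl i, ?_⟩
        show s((Sum.inl i : Fin n ⊕ Fin 2), Sum.inl (i + 1)) = _
        rw [sub_val_one hn h1]
    rw [SimpleGraph.mem_edgeSet, suspCycle, SimpleGraph.fromRel_adj] at he
    obtain ⟨hne, h | h⟩ := he
    · rcases h with ⟨i, j, rfl, rfl, hadj⟩ | ⟨s, i, rfl, rfl⟩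
      · obtain ⟨z, hz⟩ := hcyc i j hadj
        exact ⟨z, Subtype.ext hz⟩
      · exact ⟨Sum.inr (s, i), rfl⟩
    · rcases h with ⟨i, j, rfl, rfl, hadj⟩ | ⟨s, i, rfl, rfl⟩
      · obtain ⟨z, hz⟩ := hcyc i j hadj
        exact ⟨z, Subtype.ext (hz.trans Sym2.eq_swap)⟩
      · exact ⟨Sum.inr (s, i), Subtype.ext Sym2.eq_swap⟩

private lemma φ_bijective {n : ℕ} [NeZero n] (hn : 4 ≤ n) : Function.Bijective (φ hn) :=
  ⟨φ_injective hn, φ_surjective hn⟩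

private lemma card_edgeSet {n : ℕ} (hn : 4 ≤ n) : Nat.card (suspCycle n).edgeSet = 3 * n := by
  haveI : NeZero n := ⟨by omega⟩
  rw [← Nat.card_eq_of_bijective _ (φ_bijective hn)]
  simp only [Nat.card_eq_fintype_card, Fintype.card_sum, Fintype.card_prod, Fintype.card_fin]
  omega

private lemma numElts_eq {n : ℕ} (hn : 4 ≤ n) : numElts (suspCycle n) = 4 * n + 2 := by
  rw [numElts, card_edgeSet hn]
  simp only [Fintype.card_sum, Fintype.card_fin]
  omega

private noncomputable instance instES (n : ℕ) : Fintype (suspCycle n).edgeSet :=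
  Fintype.ofFinite _

private lemma cost_identity {n : ℕ} (hn : 4 ≤ n)
    (x : Fin (numElts (suspCycle n)) ≃ (Fin n ⊕ Fin 2) ⊕ (suspCycle n).edgeSet)
    (hx : IsCSeq (suspCycle n) x) :
    (cost (suspCycle n) x : ℤ) = (4 * n + 2) * (4 * n + 1)
      - 6 * ∑ i : Fin n, ((x.symm (Sum.inl (Sum.inl i)) : ℕ) : ℤ)
      - (n + 2) * (((x.symm (Sum.inl (Sum.inr 0)) : ℕ) : ℤ)
          + ((x.symm (Sum.inl (Sum.inr 1)) : ℕ) : ℤ)) := by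
  haveI : NeZero n := ⟨by omega⟩
  classical
  set pos : (Fin n ⊕ Fin 2) ⊕ (suspCycle n).edgeSet → ℤ :=
    fun z => ((x.symm z : ℕ) : ℤ) with hposdef
  set ends : (suspCycle n).edgeSet → ℤ := fun e =>
    ((Sym2.lift ⟨fun u w => ((x.symm (Sum.inl u) : ℕ) + (x.symm (Sum.inl w) : ℕ)),
      fun u w => by dsimp only; omega⟩ (e : Sym2 (Fin n ⊕ Fin 2)) : ℕ) : ℤ) with hendsdef
  -- each edge cost, cast to ℤ
  have hedge : ∀ e : (suspCycle n).edgeSet,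
      (edgeCost (suspCycle n) x e : ℤ) = 2 * pos (Sum.inr e) - ends e := by
    rintro ⟨e, he⟩
    induction e using Sym2.ind with
    | _ a b =>
      have ha := hx ⟨s(a, b), he⟩ a (Sym2.mem_mk_left a b)
      have hb := hx ⟨s(a, b), he⟩ b (Sym2.mem_mk_right a b)
      rw [Fin.lt_def] at ha hb
      have hsub : (x.symm (Sum.inl a) : ℕ) + (x.symm (Sum.inl b) : ℕ)
          ≤ 2 * (x.symm (Sum.inr ⟨s(a, b), he⟩) : ℕ) := by omega
      have hcost : edgeCost (suspCycle n) x ⟨s(a, b), he⟩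
          = 2 * (x.symm (Sum.inr ⟨s(a, b), he⟩) : ℕ)
            - ((x.symm (Sum.inl a) : ℕ) + (x.symm (Sum.inl b) : ℕ)) := by
        rw [edgeCost]
        congr 1
      have hend : ends ⟨s(a, b), he⟩
          = ((x.symm (Sum.inl a) : ℕ) : ℤ) + ((x.symm (Sum.inl b) : ℕ) : ℤ) := by
        simp only [hendsdef]
        norm_cast
      rw [hcost, Nat.cast_sub hsub, hend]
      simp only [hposdef]
      push_cast
      ring
  have hcostsum : (cost (suspCycle n) x : ℤ)
      = ∑ e : (suspCycle n).edgeSet, (edgeCost (suspCycle n) x e : ℤ) := by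
    rw [cost, finsum_eq_sum_of_fintype, Nat.cast_sum]
  -- total position sum
  have htot : ∑ z : (Fin n ⊕ Fin 2) ⊕ (suspCycle n).edgeSet, pos z
      = ((2 * n + 1) * (4 * n + 1) : ℤ) := by
    have h1 : ∑ k : Fin (numElts (suspCycle n)), pos (x k)
        = ∑ z, pos z := Equiv.sum_comp x pos
    have h2 : ∀ k : Fin (numElts (suspCycle n)), pos (x k) = ((k : ℕ) : ℤ) := by
      intro k; simp [hposdef]
    rw [← h1]
    simp only [h2]
    rw [Fin.sum_univ_eq_sum_range (fun k : ℕ => (k : ℤ)), numElts_eq hn]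
    have h3 : (∑ k ∈ Finset.range (4 * n + 2), k) = (2 * n + 1) * (4 * n + 1) := by
      have h4 := Finset.sum_range_id_mul_two (4 * n + 2)
      rw [show 4 * n + 2 - 1 = 4 * n + 1 by omega] at h4
      apply Nat.eq_of_mul_eq_mul_right (show 0 < 2 by omega)
      rw [h4]; ring
    have h5 := congrArg (fun m : ℕ => (m : ℤ)) h3
    push_cast at h5
    exact h5
  -- splitting the total position sum
  have hsplit : ∑ z : (Fin n ⊕ Fin 2) ⊕ (suspCycle n).edgeSet, pos z
      = (∑ i : Fin n, pos (Sum.inl (Sum.inl i)))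
        + (pos (Sum.inl (Sum.inr 0)) + pos (Sum.inl (Sum.inr 1)))
        + ∑ e : (suspCycle n).edgeSet, pos (Sum.inr e) := by
    rw [Fintype.sum_sum_type]
    congr 1
    rw [Fintype.sum_sum_type (f := fun v : Fin n ⊕ Fin 2 => pos (Sum.inl v))]
    rw [Fin.sum_univ_two (fun s : Fin 2 => pos (Sum.inl (Sum.inr s)))]
  -- the endpoint sum
  have hshift : ∑ i : Fin n, pos (Sum.inl (Sum.inl (i + 1)))
      = ∑ i : Fin n, pos (Sum.inl (Sum.inl i)) := by
    have := Equiv.sum_comp (Equiv.addRight (1 : Fin n))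
      (fun i : Fin n => pos (Sum.inl (Sum.inl i)))
    simpa using this
  have hends_sum : ∑ e : (suspCycle n).edgeSet, ends e
      = 4 * (∑ i : Fin n, pos (Sum.inl (Sum.inl i)))
        + n * (pos (Sum.inl (Sum.inr 0)) + pos (Sum.inl (Sum.inr 1))) := by
    rw [← Function.Bijective.sum_comp (φ_bijective hn) ends]
    rw [Fintype.sum_sum_type]
    have hA : ∑ i : Fin n, ends (φ hn (Sum.inl i))
        = (∑ i : Fin n, pos (Sum.inl (Sum.inl i)))
          + ∑ i : Fin n, pos (Sum.inl (Sum.inl (i + 1))) := by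
      rw [← Finset.sum_add_distrib]
      apply Finset.sum_congr rfl
      intro i _
      simp only [φ, hendsdef, hposdef, Sym2.lift_mk]
      push_cast
      ring
    have hB : ∑ p : Fin 2 × Fin n, ends (φ hn (Sum.inr p))
        = (n : ℤ) * (pos (Sum.inl (Sum.inr 0)) + pos (Sum.inl (Sum.inr 1)))
          + 2 * (∑ i : Fin n, pos (Sum.inl (Sum.inl i))) := by
      rw [Fintype.sum_prod_type, Fin.sum_univ_two]
      have hB0 : ∀ s : Fin 2, ∑ i : Fin n, ends (φ hn (Sum.inr (s, i)))
          = (n : ℤ) * pos (Sum.inl (Sum.inr s)) + ∑ i : Fin n, pos (Sum.inl (Sum.inl i)) := by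
        intro s
        have : ∀ i : Fin n, ends (φ hn (Sum.inr (s, i)))
            = pos (Sum.inl (Sum.inr s)) + pos (Sum.inl (Sum.inl i)) := by
          intro i
          simp only [φ, hendsdef, hposdef, Sym2.lift_mk]
          push_cast
          ring
        simp only [this]
        rw [Finset.sum_add_distrib, Finset.sum_const, Finset.card_univ, Fintype.card_fin,
          nsmul_eq_mul]
      rw [hB0 0, hB0 1]
      ring
    rw [hA, hshift, hB]
    ring
  -- put everything together
  have hE : ∑ e : (suspCycle n).edgeSet, pos (Sum.inr e)
      = ((2 * n + 1) * (4 * n + 1) : ℤ)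
        - (∑ i : Fin n, pos (Sum.inl (Sum.inl i)))
        - (pos (Sum.inl (Sum.inr 0)) + pos (Sum.inl (Sum.inr 1))) := by
    rw [← htot, hsplit]; ring
  rw [hcostsum]
  calc ∑ e : (suspCycle n).edgeSet, (edgeCost (suspCycle n) x e : ℤ)
      = ∑ e : (suspCycle n).edgeSet, (2 * pos (Sum.inr e) - ends e) :=
        Finset.sum_congr rfl fun e _ => hedge e
    _ = 2 * (∑ e : (suspCycle n).edgeSet, pos (Sum.inr e))
          - ∑ e : (suspCycle n).edgeSet, ends e := by
        rw [Finset.sum_sub_distrib, Finset.mul_sum]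
    _ = _ := by
        rw [hE, hends_sum]
        simp only [hposdef]
        push_cast
        ring

private lemma cost_le {n : ℕ} (hn : 4 ≤ n)
    (x : Fin (numElts (suspCycle n)) ≃ (Fin n ⊕ Fin 2) ⊕ (suspCycle n).edgeSet)
    (hx : IsCSeq (suspCycle n) x) :
    cost (suspCycle n) x ≤ 13 * n ^ 2 + 2 * n := by
  have hid := cost_identity hn x hx
  rw [← Nat.cast_sum] at hid
  -- the vertex positions are pairwise distinct naturals
  have hinj : Function.Injective (fun v : Fin n ⊕ Fin 2 => (x.symm (Sum.inl v) : ℕ)) := by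
    intro u v h
    exact Sum.inl_injective (x.symm.injective (Fin.val_injective h))
  have hlow := sum_le_of_injective _ hinj
  have hcard : Fintype.card (Fin n ⊕ Fin 2) = n + 2 := by simp
  rw [hcard] at hlow
  have hgauss := Finset.sum_range_id_mul_two (n + 2)
  rw [show n + 2 - 1 = n + 1 by omega] at hgauss
  have hsplitN : ∑ v : Fin n ⊕ Fin 2, (x.symm (Sum.inl v) : ℕ)
      = (∑ i : Fin n, (x.symm (Sum.inl (Sum.inl i)) : ℕ))
        + ((x.symm (Sum.inl (Sum.inr 0)) : ℕ) + (x.symm (Sum.inl (Sum.inr 1)) : ℕ)) := by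
    rw [Fintype.sum_sum_type (f := fun v : Fin n ⊕ Fin 2 => (x.symm (Sum.inl v) : ℕ))]
    rw [Fin.sum_univ_two (fun s : Fin 2 => (x.symm (Sum.inl (Sum.inr s)) : ℕ))]
  have hPne : (x.symm (Sum.inl (Sum.inr 0)) : ℕ) ≠ (x.symm (Sum.inl (Sum.inr 1)) : ℕ) := by
    intro h
    have h2 := hinj h
    simp only [Sum.inr.injEq] at h2
    exact absurd h2 (by decide)
  rw [hsplitN] at hlow
  set Sn := ∑ i : Fin n, (x.symm (Sum.inl (Sum.inl i)) : ℕ) with hSn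
  set p0 := (x.symm (Sum.inl (Sum.inr 0)) : ℕ) with hp0
  set p1 := (x.symm (Sum.inl (Sum.inr 1)) : ℕ) with hp1
  have h1 : (n + 2) * (n + 1) ≤ 2 * (Sn + (p0 + p1)) := by omega
  have hbc : 1 ≤ p0 + p1 := by omega
  have hfin : (cost (suspCycle n) x : ℤ) ≤ 13 * (n : ℤ) ^ 2 + 2 * (n : ℤ) := by
    have hN : (4 : ℤ) ≤ (n : ℤ) := by exact_mod_cast hn
    have htri : ((n : ℤ) + 2) * ((n : ℤ) + 1)
        ≤ 2 * ((Sn : ℤ) + ((p0 : ℤ) + (p1 : ℤ))) := by exact_mod_cast h1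
    have hbc' : (1 : ℤ) ≤ (p0 : ℤ) + (p1 : ℤ) := by exact_mod_cast hbc
    have hint : (0 : ℤ) ≤ ((n : ℤ) - 4) * ((p0 : ℤ) + (p1 : ℤ) - 1) :=
      mul_nonneg (by linarith) (by linarith)
    nlinarith [hid, htri, hint]
  exact_mod_cast hfin

private lemma exists_max {n : ℕ} (hn : 4 ≤ n) :
    ∃ x, IsCSeq (suspCycle n) x ∧ cost (suspCycle n) x = 13 * n ^ 2 + 2 * n := by
  classical
  haveI : NeZero n := ⟨by omega⟩
  have hcardE : Fintype.card (suspCycle n).edgeSet = 3 * n := by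
    rw [← Nat.card_eq_fintype_card]; exact card_edgeSet hn
  have hNE : (n + 2) + 3 * n = numElts (suspCycle n) := by rw [numElts_eq hn]; omega
  set wE : (suspCycle n).edgeSet ≃ Fin (3 * n) := Fintype.equivFinOfCardEq hcardE with hwE
  set wV : (Fin n ⊕ Fin 2) ≃ Fin (n + 2) :=
    (Equiv.sumComm (Fin n) (Fin 2)).trans (finSumFinEquiv.trans (finCongr (by omega))) with hwV
  set y : (Fin n ⊕ Fin 2) ⊕ (suspCycle n).edgeSet ≃ Fin (numElts (suspCycle n)) :=
    (Equiv.sumCongr wV wE).trans (finSumFinEquiv.trans (finCongr hNE)) with hy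
  have hyv1 : ∀ i : Fin n, (y (Sum.inl (Sum.inl i)) : ℕ) = 2 + (i : ℕ) := by
    intro i
    simp [hy, hwV, finSumFinEquiv_apply_left, finSumFinEquiv_apply_right]
    omega
  have hyv2 : ∀ s : Fin 2, (y (Sum.inl (Sum.inr s)) : ℕ) = (s : ℕ) := by
    intro s
    simp [hy, hwV, finSumFinEquiv_apply_left, finSumFinEquiv_apply_right]
  have hye : ∀ e : (suspCycle n).edgeSet, n + 2 ≤ (y (Sum.inr e) : ℕ) := by
    intro e
    simp [hy, finSumFinEquiv_apply_right]
  have hsymm : ∀ z, y.symm.symm z = y z := fun z => by rw [Equiv.symm_symm]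
  have hcs : IsCSeq (suspCycle n) y.symm := by
    intro e v hv
    rw [Fin.lt_def, hsymm, hsymm]
    have h1 := hye e
    rcases v with i | s
    · have h2 := hyv1 i
      have h3 := i.isLt
      omega
    · have h2 := hyv2 s
      have h3 := s.isLt
      omega
  refine ⟨y.symm, hcs, ?_⟩
  have hid := cost_identity hn y.symm hcs
  simp only [hsymm] at hid
  simp only [hyv1, hyv2] at hid
  -- sum of cycle positions
  have hT2 := Finset.sum_range_id_mul_two n
  have hT : (∑ i : Fin n, ((2 + (i : ℕ) : ℕ) : ℤ)) * 2 = 4 * (n : ℤ) + (n : ℤ) * ((n : ℤ) - 1) := by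
    have e1 : ∑ i : Fin n, ((2 + (i : ℕ) : ℕ) : ℤ)
        = 2 * (n : ℤ) + ∑ i : Fin n, ((i : ℕ) : ℤ) := by
      push_cast
      rw [Finset.sum_add_distrib]
      simp [Finset.card_univ, mul_comm]
    have e2 : ∑ i : Fin n, ((i : ℕ) : ℤ) = ((∑ k ∈ Finset.range n, k : ℕ) : ℤ) := by
      rw [Nat.cast_sum, Fin.sum_univ_eq_sum_range (fun k : ℕ => (k : ℤ))]
    have e3 : (((∑ k ∈ Finset.range n, k : ℕ) : ℤ)) * 2 = (n : ℤ) * ((n : ℤ) - 1) := by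
      have := congrArg (fun m : ℕ => (m : ℤ)) hT2
      push_cast [Nat.cast_sub (by omega : 1 ≤ n)] at this
      rw [Nat.cast_sum]
      linarith
    rw [e1, e2]
    linarith
  have hgoal : (cost (suspCycle n) y.symm : ℤ) = 13 * (n : ℤ) ^ 2 + 2 * (n : ℤ) := by
    have h0 : ((0 : Fin 2) : ℕ) = 0 := rfl
    have h1 : ((1 : Fin 2) : ℕ) = 1 := rfl
    rw [h0, h1] at hid
    push_cast at hid hT
    linarith [hid, hT]
  exact_mod_cast hgoal

/-- `ν*(ΣC_n) = 13n² + 2n` for `n ≥ 4`. -/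
theorem maxCost_suspCycle (n : ℕ) (hn : 4 ≤ n) :
    maxCost (suspCycle n) = 13 * n ^ 2 + 2 * n := by
  obtain ⟨x₀, hx₀, hc₀⟩ := exists_max hn
  have hmem : 13 * n ^ 2 + 2 * n
      ∈ {c | ∃ x, IsCSeq (suspCycle n) x ∧ cost (suspCycle n) x = c} := ⟨x₀, hx₀, hc₀⟩
  have hub : ∀ c ∈ {c | ∃ x, IsCSeq (suspCycle n) x ∧ cost (suspCycle n) x = c},
      c ≤ 13 * n ^ 2 + 2 * n := by
    rintro c ⟨x, hx, rfl⟩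
    exact cost_le hn x hx
  exact le_antisymm (csSup_le ⟨_, hmem⟩ hub) (le_csSup ⟨_, hub⟩ hmem)

end ConsCost
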